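/- E ∖ Δ and F ∖ Δ are each single orbits of G = SL(2,ℂ): any two points of E not lying in Δ lie in the same G-orbit, and any two points of F not lying in Δ lie in the same G-orbit. -/

import Mathlib

open Matrix

/-- A point of `ℙ¹ × ℙ¹ × ℙ²` in homogeneous coordinates: `x, y` are nonzero vectors in `ℂ²`
(homogeneous coordinates on the two `ℙ¹`-factors) and `z` is a nonzero symmetric `2×2` complex
matrix (homogeneous coordinates `[z₀:z₁:z₂]` on `ℙ²`, the projectivized symmetric matrices,
via `z = [[z₀,z₁],[z₁,z₂]]`). -/
structure ProjPoint where
  x : Fin 2 → ℂ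
  y : Fin 2 → ℂ
  z : Matrix (Fin 2) (Fin 2) ℂ
  hx : x ≠ 0
  hy : y ≠ 0
  hz : z ≠ 0
  hzsymm : zᵀ = z

/-- Membership in the threefold `X`:
`x₀y₀z₂ + x₁y₁z₀ − x₀y₁z₁ − x₁y₀z₁ = 0`. -/
def onX (p : ProjPoint) : Prop :=
  p.x 0 * p.y 0 * p.z 1 1 + p.x 1 * p.y 1 * p.z 0 0
    - p.x 0 * p.y 1 * p.z 0 1 - p.x 1 * p.y 0 * p.z 0 1 = 0

/-- Membership in `Δ = X ∩ {x₀y₁ − x₁y₀ = 0}`. -/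
def memDelta (p : ProjPoint) : Prop := p.x 0 * p.y 1 - p.x 1 * p.y 0 = 0

/-- Membership in `E = X ∩ {x₁z₀ − x₀z₁ = 0, x₁z₁ − x₀z₂ = 0}`. -/
def memE (p : ProjPoint) : Prop :=
  p.x 1 * p.z 0 0 - p.x 0 * p.z 0 1 = 0 ∧ p.x 1 * p.z 0 1 - p.x 0 * p.z 1 1 = 0

/-- Membership in `F = X ∩ {y₁z₀ − y₀z₁ = 0, y₀z₂ − y₁z₁ = 0}`. -/
def memF (p : ProjPoint) : Prop :=
  p.y 1 * p.z 0 0 - p.y 0 * p.z 0 1 = 0 ∧ p.y 0 * p.z 1 1 - p.y 1 * p.z 0 1 = 0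

/-- Two points of `ℙ¹ × ℙ¹ × ℙ²` lie in the same orbit of the diagonal `SL(2,ℂ)`-action, where
`SL(2,ℂ)` acts standardly on each `ℙ¹`-factor and by `g·[M] := [g M gᵀ]` on `ℙ²`. -/
def sameOrbit (p q : ProjPoint) : Prop :=
  ∃ g : Matrix.SpecialLinearGroup (Fin 2) ℂ, ∃ a b c : ℂ,
    a ≠ 0 ∧ b ≠ 0 ∧ c ≠ 0 ∧
    (g : Matrix (Fin 2) (Fin 2) ℂ) *ᵥ p.x = a • q.x ∧
    (g : Matrix (Fin 2) (Fin 2) ℂ) *ᵥ p.y = b • q.y ∧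
    (g : Matrix (Fin 2) (Fin 2) ℂ) * p.z * (g : Matrix (Fin 2) (Fin 2) ℂ)ᵀ = c • q.z


section Aux

open Matrix

private lemma vne (u : Fin 2 → ℂ) (h : u 0 ≠ 0 ∨ u 1 ≠ 0) : u ≠ 0 := by
  intro h0
  rcases h with h | h <;> exact h (by rw [h0]; rfl)

private lemma mne (m : Matrix (Fin 2) (Fin 2) ℂ) (h : m 0 0 ≠ 0 ∨ m 1 1 ≠ 0) : m ≠ 0 := by
  intro h0
  rcases h with h | h <;> exact h (by rw [h0]; rfl)

/-- Canonical point of `E ∖ Δ`. -/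
noncomputable def pE : ProjPoint where
  x := ![1, 0]
  y := ![0, 1]
  z := !![1, 0; 0, 0]
  hx := vne _ (Or.inl (by norm_num))
  hy := vne _ (Or.inr (by norm_num))
  hz := mne _ (Or.inl (by norm_num))
  hzsymm := by ext i j; fin_cases i <;> fin_cases j <;> rfl

/-- Canonical point of `F ∖ Δ`. -/
noncomputable def pF : ProjPoint where
  x := ![1, 0]
  y := ![0, 1]
  z := !![0, 0; 0, 1]
  hx := vne _ (Or.inl (by norm_num))
  hy := vne _ (Or.inr (by norm_num))
  hz := mne _ (Or.inr (by norm_num))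
  hzsymm := by ext i j; fin_cases i <;> fin_cases j <;> rfl

private lemma sameOrbit_symm {p q : ProjPoint} (h : sameOrbit p q) : sameOrbit q p := by
  obtain ⟨g, a, b, c, ha, hb, hc, hgx, hgy, hgz⟩ := h
  have h1 : ((g⁻¹ : SpecialLinearGroup (Fin 2) ℂ) : Matrix (Fin 2) (Fin 2) ℂ) * g = 1 := by
    rw [← Matrix.SpecialLinearGroup.coe_mul]
    simp
  refine ⟨g⁻¹, a⁻¹, b⁻¹, c⁻¹, inv_ne_zero ha, inv_ne_zero hb, inv_ne_zero hc, ?_, ?_, ?_⟩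
  · have h3 : ((g⁻¹ : SpecialLinearGroup (Fin 2) ℂ) : Matrix (Fin 2) (Fin 2) ℂ) *ᵥ
        ((g : Matrix (Fin 2) (Fin 2) ℂ) *ᵥ p.x) = p.x := by
      rw [Matrix.mulVec_mulVec, h1, Matrix.one_mulVec]
    rw [hgx, Matrix.mulVec_smul] at h3
    rw [← h3, smul_smul, inv_mul_cancel₀ ha, one_smul]
  · have h3 : ((g⁻¹ : SpecialLinearGroup (Fin 2) ℂ) : Matrix (Fin 2) (Fin 2) ℂ) *ᵥ
        ((g : Matrix (Fin 2) (Fin 2) ℂ) *ᵥ p.y) = p.y := by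
      rw [Matrix.mulVec_mulVec, h1, Matrix.one_mulVec]
    rw [hgy, Matrix.mulVec_smul] at h3
    rw [← h3, smul_smul, inv_mul_cancel₀ hb, one_smul]
  · have hT : (g : Matrix (Fin 2) (Fin 2) ℂ)ᵀ *
        ((g⁻¹ : SpecialLinearGroup (Fin 2) ℂ) : Matrix (Fin 2) (Fin 2) ℂ)ᵀ = 1 := by
      rw [← Matrix.transpose_mul, h1, Matrix.transpose_one]
    have h3 : ((g⁻¹ : SpecialLinearGroup (Fin 2) ℂ) : Matrix (Fin 2) (Fin 2) ℂ) *
        ((g : Matrix (Fin 2) (Fin 2) ℂ) * p.z * (g : Matrix (Fin 2) (Fin 2) ℂ)ᵀ) *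
        ((g⁻¹ : SpecialLinearGroup (Fin 2) ℂ) : Matrix (Fin 2) (Fin 2) ℂ)ᵀ = p.z := by
      calc ((g⁻¹ : SpecialLinearGroup (Fin 2) ℂ) : Matrix (Fin 2) (Fin 2) ℂ) *
            ((g : Matrix (Fin 2) (Fin 2) ℂ) * p.z * (g : Matrix (Fin 2) (Fin 2) ℂ)ᵀ) *
            ((g⁻¹ : SpecialLinearGroup (Fin 2) ℂ) : Matrix (Fin 2) (Fin 2) ℂ)ᵀ
          = (((g⁻¹ : SpecialLinearGroup (Fin 2) ℂ) : Matrix (Fin 2) (Fin 2) ℂ) * g) * p.z *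
            ((g : Matrix (Fin 2) (Fin 2) ℂ)ᵀ *
              ((g⁻¹ : SpecialLinearGroup (Fin 2) ℂ) : Matrix (Fin 2) (Fin 2) ℂ)ᵀ) := by
            noncomm_ring
        _ = p.z := by rw [h1, hT, Matrix.one_mul, Matrix.mul_one]
    rw [hgz, Matrix.mul_smul, Matrix.smul_mul] at h3
    rw [← h3, smul_smul, inv_mul_cancel₀ hc, one_smul]

private lemma sameOrbit_trans {p q r : ProjPoint} (h1 : sameOrbit p q) (h2 : sameOrbit q r) :
    sameOrbit p r := by
  obtain ⟨g1, a1, b1, c1, ha1, hb1, hc1, hx1, hy1, hz1⟩ := h1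
  obtain ⟨g2, a2, b2, c2, ha2, hb2, hc2, hx2, hy2, hz2⟩ := h2
  refine ⟨g2 * g1, a1 * a2, b1 * b2, c1 * c2, mul_ne_zero ha1 ha2, mul_ne_zero hb1 hb2,
    mul_ne_zero hc1 hc2, ?_, ?_, ?_⟩
  · rw [Matrix.SpecialLinearGroup.coe_mul, ← Matrix.mulVec_mulVec, hx1, Matrix.mulVec_smul, hx2,
      smul_smul]
  · rw [Matrix.SpecialLinearGroup.coe_mul, ← Matrix.mulVec_mulVec, hy1, Matrix.mulVec_smul, hy2,
      smul_smul]
  · rw [Matrix.SpecialLinearGroup.coe_mul, Matrix.transpose_mul]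
    calc (g2 : Matrix (Fin 2) (Fin 2) ℂ) * g1 * p.z *
          ((g1 : Matrix (Fin 2) (Fin 2) ℂ)ᵀ * (g2 : Matrix (Fin 2) (Fin 2) ℂ)ᵀ)
        = (g2 : Matrix (Fin 2) (Fin 2) ℂ) *
          ((g1 : Matrix (Fin 2) (Fin 2) ℂ) * p.z * (g1 : Matrix (Fin 2) (Fin 2) ℂ)ᵀ) *
          (g2 : Matrix (Fin 2) (Fin 2) ℂ)ᵀ := by noncomm_ring
      _ = c1 • ((g2 : Matrix (Fin 2) (Fin 2) ℂ) * q.z * (g2 : Matrix (Fin 2) (Fin 2) ℂ)ᵀ) := by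
          rw [hz1, Matrix.mul_smul, Matrix.smul_mul]
      _ = (c1 * c2) • r.z := by rw [hz2, smul_smul]

/-- The standard matrix sending `px ↦ e₀` and `py ↦ d • e₁`. -/
private lemma gmat_mulVec_x (px py : Fin 2 → ℂ) (hd : px 0 * py 1 - px 1 * py 0 ≠ 0) :
    !![py 1 / (px 0 * py 1 - px 1 * py 0), -(py 0 / (px 0 * py 1 - px 1 * py 0));
        -(px 1), px 0] *ᵥ px = (1 : ℂ) • (![1, 0] : Fin 2 → ℂ) := by
  have hd' : py 1 * px 0 - px 1 * py 0 ≠ 0 := by rwa [mul_comm (py 1)]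
  funext i
  fin_cases i <;>
    (try simp [Matrix.mulVec, dotProduct, Fin.sum_univ_two]) <;>
    (try field_simp) <;> (try ring)

private lemma gmat_mulVec_y (px py : Fin 2 → ℂ) (hd : px 0 * py 1 - px 1 * py 0 ≠ 0) :
    !![py 1 / (px 0 * py 1 - px 1 * py 0), -(py 0 / (px 0 * py 1 - px 1 * py 0));
        -(px 1), px 0] *ᵥ py = (px 0 * py 1 - px 1 * py 0) • (![0, 1] : Fin 2 → ℂ) := by
  have hd' : py 1 * px 0 - px 1 * py 0 ≠ 0 := by rwa [mul_comm (py 1)]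
  funext i
  fin_cases i <;>
    (try simp [Matrix.mulVec, dotProduct, Fin.sum_univ_two]) <;>
    (try field_simp) <;> (try ring)

private lemma gmat_conj_xx (px py : Fin 2 → ℂ) (c : ℂ) (z : Matrix (Fin 2) (Fin 2) ℂ)
    (hz : ∀ i j, z i j = c * px i * px j)
    (hd : px 0 * py 1 - px 1 * py 0 ≠ 0) :
    !![py 1 / (px 0 * py 1 - px 1 * py 0), -(py 0 / (px 0 * py 1 - px 1 * py 0));
        -(px 1), px 0] * z *
      !![py 1 / (px 0 * py 1 - px 1 * py 0), -(py 0 / (px 0 * py 1 - px 1 * py 0));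
        -(px 1), px 0]ᵀ
      = c • (!![1, 0; 0, 0] : Matrix (Fin 2) (Fin 2) ℂ) := by
  have hd' : py 1 * px 0 - px 1 * py 0 ≠ 0 := by rwa [mul_comm (py 1)]
  ext i j
  fin_cases i <;> fin_cases j <;>
    (try simp only [Matrix.mul_apply, Matrix.transpose_apply, Fin.sum_univ_two, hz,
      Matrix.smul_apply, smul_eq_mul]) <;>
    (try simp) <;> (try field_simp) <;> (try ring)

private lemma gmat_conj_yy (px py : Fin 2 → ℂ) (c : ℂ) (z : Matrix (Fin 2) (Fin 2) ℂ)
    (hz : ∀ i j, z i j = c * py i * py j)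
    (hd : px 0 * py 1 - px 1 * py 0 ≠ 0) :
    !![py 1 / (px 0 * py 1 - px 1 * py 0), -(py 0 / (px 0 * py 1 - px 1 * py 0));
        -(px 1), px 0] * z *
      !![py 1 / (px 0 * py 1 - px 1 * py 0), -(py 0 / (px 0 * py 1 - px 1 * py 0));
        -(px 1), px 0]ᵀ
      = (c * (px 0 * py 1 - px 1 * py 0) ^ 2) • (!![0, 0; 0, 1] : Matrix (Fin 2) (Fin 2) ℂ) := by
  have hd' : py 1 * px 0 - px 1 * py 0 ≠ 0 := by rwa [mul_comm (py 1)]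
  ext i j
  fin_cases i <;> fin_cases j <;>
    (try simp only [Matrix.mul_apply, Matrix.transpose_apply, Fin.sum_univ_two, hz,
      Matrix.smul_apply, smul_eq_mul]) <;>
    (try simp) <;> (try field_simp) <;> (try ring)

private lemma gmat_det (px py : Fin 2 → ℂ) (hd : px 0 * py 1 - px 1 * py 0 ≠ 0) :
    Matrix.det !![py 1 / (px 0 * py 1 - px 1 * py 0), -(py 0 / (px 0 * py 1 - px 1 * py 0));
        -(px 1), px 0] = 1 := by
  have hd' : py 1 * px 0 - px 1 * py 0 ≠ 0 := by rwa [mul_comm (py 1)]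
  rw [Matrix.det_fin_two_of]
  field_simp

/-- On `E`, the matrix `z` is a nonzero multiple of `x xᵀ`. -/
private lemma E_z_eq (p : ProjPoint) (hE : memE p) :
    ∃ c : ℂ, c ≠ 0 ∧ ∀ i j, p.z i j = c * p.x i * p.x j := by
  obtain ⟨h1, h2⟩ := hE
  have hsym : p.z 1 0 = p.z 0 1 := by
    conv_lhs => rw [← p.hzsymm]
    rfl
  have hx01 : p.x 0 ≠ 0 ∨ p.x 1 ≠ 0 := by
    by_contra h
    push_neg at h
    exact p.hx (funext fun i => by fin_cases i <;> simp [h.1, h.2])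
  rcases hx01 with hx0 | hx1
  · refine ⟨p.z 0 0 / (p.x 0 * p.x 0), ?_, ?_⟩
    · intro h
      have hz00 : p.z 0 0 = 0 := by
        field_simp at h
        simpa using h
      have hz01 : p.z 0 1 = 0 := by
        have := h1
        rw [hz00, mul_zero, zero_sub, neg_eq_zero] at this
        exact (mul_eq_zero.mp this).resolve_left hx0
      have hz11 : p.z 1 1 = 0 := by
        have := h2
        rw [hz01, mul_zero, zero_sub, neg_eq_zero] at this
        exact (mul_eq_zero.mp this).resolve_left hx0
      refine p.hz ?_
      ext i j
      fin_cases i <;> fin_cases j <;>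
        first
          | exact hz00.trans rfl
          | exact hz01.trans rfl
          | exact (hsym.trans hz01).trans rfl
          | exact hz11.trans rfl
    · have e01 : p.x 0 * p.z 0 1 = p.x 1 * p.z 0 0 := by linear_combination -h1
      have e11 : p.x 0 * p.z 1 1 = p.x 1 * p.z 0 1 := by linear_combination -h2
      intro i j
      fin_cases i <;> fin_cases j <;> simp only [Fin.zero_eta, Fin.mk_one] <;>
        rw [div_mul_eq_mul_div, div_mul_eq_mul_div, eq_div_iff (mul_ne_zero hx0 hx0)] <;> ring_nf
      · linear_combination p.x 0 * e01
      · linear_combination hsym * (p.x 0 * p.x 0) + p.x 0 * e01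
      · linear_combination p.x 0 * e11 + p.x 1 * e01
  · refine ⟨p.z 1 1 / (p.x 1 * p.x 1), ?_, ?_⟩
    · intro h
      have hz11 : p.z 1 1 = 0 := by
        field_simp at h
        simpa using h
      have hz01 : p.z 0 1 = 0 := by
        have := h2
        rw [hz11, mul_zero, sub_zero] at this
        exact (mul_eq_zero.mp this).resolve_left hx1
      have hz00 : p.z 0 0 = 0 := by
        have := h1
        rw [hz01, mul_zero, sub_zero] at this
        exact (mul_eq_zero.mp this).resolve_left hx1
      refine p.hz ?_
      ext i j
      fin_cases i <;> fin_cases j <;>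
        first
          | exact hz00.trans rfl
          | exact hz01.trans rfl
          | exact (hsym.trans hz01).trans rfl
          | exact hz11.trans rfl
    · have e00 : p.x 1 * p.z 0 0 = p.x 0 * p.z 0 1 := by linear_combination h1
      have e01 : p.x 1 * p.z 0 1 = p.x 0 * p.z 1 1 := by linear_combination h2
      intro i j
      fin_cases i <;> fin_cases j <;> simp only [Fin.zero_eta, Fin.mk_one] <;>
        rw [div_mul_eq_mul_div, div_mul_eq_mul_div, eq_div_iff (mul_ne_zero hx1 hx1)] <;> ring_nf
      · linear_combination p.x 1 * e00 + p.x 0 * e01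
      · linear_combination p.x 1 * e01
      · linear_combination hsym * (p.x 1 * p.x 1) + p.x 1 * e01

/-- On `F`, the matrix `z` is a nonzero multiple of `y yᵀ`. -/
private lemma F_z_eq (p : ProjPoint) (hF : memF p) :
    ∃ c : ℂ, c ≠ 0 ∧ ∀ i j, p.z i j = c * p.y i * p.y j := by
  obtain ⟨h1, h2⟩ := hF
  have hsym : p.z 1 0 = p.z 0 1 := by
    conv_lhs => rw [← p.hzsymm]
    rfl
  have hy01 : p.y 0 ≠ 0 ∨ p.y 1 ≠ 0 := by
    by_contra h
    push_neg at h
    exact p.hy (funext fun i => by fin_cases i <;> simp [h.1, h.2])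
  rcases hy01 with hy0 | hy1
  · refine ⟨p.z 0 0 / (p.y 0 * p.y 0), ?_, ?_⟩
    · intro h
      have hz00 : p.z 0 0 = 0 := by
        field_simp at h
        simpa using h
      have hz01 : p.z 0 1 = 0 := by
        have := h1
        rw [hz00, mul_zero, zero_sub, neg_eq_zero] at this
        exact (mul_eq_zero.mp this).resolve_left hy0
      have hz11 : p.z 1 1 = 0 := by
        have := h2
        rw [hz01, mul_zero, sub_zero] at this
        exact (mul_eq_zero.mp this).resolve_left hy0
      refine p.hz ?_
      ext i j
      fin_cases i <;> fin_cases j <;>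
        first
          | exact hz00.trans rfl
          | exact hz01.trans rfl
          | exact (hsym.trans hz01).trans rfl
          | exact hz11.trans rfl
    · have e01 : p.y 0 * p.z 0 1 = p.y 1 * p.z 0 0 := by linear_combination -h1
      have e11 : p.y 0 * p.z 1 1 = p.y 1 * p.z 0 1 := by linear_combination h2
      intro i j
      fin_cases i <;> fin_cases j <;> simp only [Fin.zero_eta, Fin.mk_one] <;>
        rw [div_mul_eq_mul_div, div_mul_eq_mul_div, eq_div_iff (mul_ne_zero hy0 hy0)] <;> ring_nf
      · linear_combination p.y 0 * e01
      · linear_combination hsym * (p.y 0 * p.y 0) + p.y 0 * e01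
      · linear_combination p.y 0 * e11 + p.y 1 * e01
  · refine ⟨p.z 1 1 / (p.y 1 * p.y 1), ?_, ?_⟩
    · intro h
      have hz11 : p.z 1 1 = 0 := by
        field_simp at h
        simpa using h
      have hz01 : p.z 0 1 = 0 := by
        have := h2
        rw [hz11, mul_zero, zero_sub, neg_eq_zero] at this
        exact (mul_eq_zero.mp this).resolve_left hy1
      have hz00 : p.z 0 0 = 0 := by
        have := h1
        rw [hz01, mul_zero, sub_zero] at this
        exact (mul_eq_zero.mp this).resolve_left hy1
      refine p.hz ?_
      ext i j
      fin_cases i <;> fin_cases j <;>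
        first
          | exact hz00.trans rfl
          | exact hz01.trans rfl
          | exact (hsym.trans hz01).trans rfl
          | exact hz11.trans rfl
    · have e00 : p.y 1 * p.z 0 0 = p.y 0 * p.z 0 1 := by linear_combination h1
      have e01 : p.y 1 * p.z 0 1 = p.y 0 * p.z 1 1 := by linear_combination -h2
      intro i j
      fin_cases i <;> fin_cases j <;> simp only [Fin.zero_eta, Fin.mk_one] <;>
        rw [div_mul_eq_mul_div, div_mul_eq_mul_div, eq_div_iff (mul_ne_zero hy1 hy1)] <;> ring_nf
      · linear_combination p.y 1 * e00 + p.y 0 * e01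
      · linear_combination p.y 1 * e01
      · linear_combination hsym * (p.y 1 * p.y 1) + p.y 1 * e01

/-- Every point of `E ∖ Δ` lies in the orbit of the canonical point `pE`. -/
private lemma toE (p : ProjPoint) (hE : memE p) (hΔ : ¬ memDelta p) : sameOrbit p pE := by
  obtain ⟨c, hc, hzc⟩ := E_z_eq p hE
  have hd : p.x 0 * p.y 1 - p.x 1 * p.y 0 ≠ 0 := hΔ
  refine ⟨⟨_, gmat_det p.x p.y hd⟩, 1, p.x 0 * p.y 1 - p.x 1 * p.y 0, c, one_ne_zero, hd, hc,
    ?_, ?_, ?_⟩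
  · exact gmat_mulVec_x p.x p.y hd
  · exact gmat_mulVec_y p.x p.y hd
  · exact gmat_conj_xx p.x p.y c p.z hzc hd

/-- Every point of `F ∖ Δ` lies in the orbit of the canonical point `pF`. -/
private lemma toF (p : ProjPoint) (hF : memF p) (hΔ : ¬ memDelta p) : sameOrbit p pF := by
  obtain ⟨c, hc, hzc⟩ := F_z_eq p hF
  have hd : p.x 0 * p.y 1 - p.x 1 * p.y 0 ≠ 0 := hΔ
  refine ⟨⟨_, gmat_det p.x p.y hd⟩, 1, p.x 0 * p.y 1 - p.x 1 * p.y 0,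
    c * (p.x 0 * p.y 1 - p.x 1 * p.y 0) ^ 2, one_ne_zero, hd,
    mul_ne_zero hc (pow_ne_zero 2 hd), ?_, ?_, ?_⟩
  · exact gmat_mulVec_x p.x p.y hd
  · exact gmat_mulVec_y p.x p.y hd
  · exact gmat_conj_yy p.x p.y c p.z hzc hd

end Aux

/-- **Statement 14.** `E ∖ Δ` and `F ∖ Δ` are each single orbits of `G = SL(2,ℂ)`: any two
points of `E` not lying in `Δ` lie in the same `G`-orbit, and any two points of `F` not lying in
`Δ` lie in the same `G`-orbit. -/
theorem E_and_F_minus_delta_single_orbits :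
    (∀ p q : ProjPoint, onX p → onX q → memE p → ¬ memDelta p → memE q → ¬ memDelta q →
      sameOrbit p q) ∧
    (∀ p q : ProjPoint, onX p → onX q → memF p → ¬ memDelta p → memF q → ¬ memDelta q →
      sameOrbit p q) := by
  constructor
  · intro p q _ _ hEp hDp hEq hDq
    exact sameOrbit_trans (toE p hEp hDp) (sameOrbit_symm (toE q hEq hDq))
  · intro p q _ _ hFp hDp hFq hDq
    exact sameOrbit_trans (toF p hFp hDp) (sameOrbit_symm (toF q hFq hDq))
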